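/- Let K be a field, V a finite-dimensional K-vector space, r ≥ 1, and f : V → V a K-linear map. Let T be the unique K-linear endomorphism of the r-fold tensor power V^{⊗r} satisfying T(v_1 ⊗ v_2 ⊗ ⋯ ⊗ v_r) = f(v_r) ⊗ f(v_1) ⊗ ⋯ ⊗ f(v_{r−1}) on elementary tensors (i.e. T is the cyclic shift of tensor factors composed with f applied in every factor). Then the trace of T on V^{⊗r} equals the trace of the r-th iterate f^r on V. In particular, taking f to be the identity, the trace of the cyclic permutation of tensor factors on V^{⊗r} equals dim_K V. -/

import Mathlib

open scoped TensorProduct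
open PiTensorProduct

section aux

set_option linter.unusedSectionVars false

variable {K : Type*} [Field K] {V : Type*} [AddCommGroup V] [Module K V]
  {ι : Type*} [Fintype ι] [DecidableEq ι] {r : ℕ}

lemma tprod_expand (b : Module.Basis ι K V) (v : Fin r → V) :
    tprod K v = ∑ w : Fin r → ι,
      (∏ i, b.repr (v i) (w i)) • tprod K (fun i => b (w i)) := by
  have h1 : tprod K v = tprod K (fun i => ∑ j, b.repr (v i) j • b j) := by
    congr 1; ext i; rw [b.sum_repr]
  rw [h1, MultilinearMap.map_sum]
  exact Finset.sum_congr rfl fun w _ => MultilinearMap.map_smul_univ _ _ _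

noncomputable def coordT (b : Module.Basis ι K V) (w : Fin r → ι) :
    (⨂[K] _ : Fin r, V) →ₗ[K] K :=
  lift ((MultilinearMap.mkPiAlgebra K (Fin r) K).compLinearMap (fun i => b.coord (w i)))

lemma coordT_tprod (b : Module.Basis ι K V) (w : Fin r → ι) (v : Fin r → V) :
    coordT b w (tprod K v) = ∏ i, b.repr (v i) (w i) := by
  simp [coordT, MultilinearMap.compLinearMap_apply, Module.Basis.coord_apply]

lemma coordT_tprod_basis (b : Module.Basis ι K V) (w w' : Fin r → ι) :
    coordT b w (tprod K (fun i => b (w' i))) = if w' = w then 1 else 0 := by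
  rw [coordT_tprod]
  by_cases h : w' = w
  · subst h; simp
  · rw [if_neg h]
    obtain ⟨i, hi⟩ := Function.ne_iff.mp h
    exact Finset.prod_eq_zero (Finset.mem_univ i) (by simp [Finsupp.single_apply, hi])

noncomputable def tensorBasis (b : Module.Basis ι K V) :
    Module.Basis (Fin r → ι) K (⨂[K] _ : Fin r, V) := by
  refine Module.Basis.mk (v := fun w => tprod K (fun i => b (w i))) ?_ ?_
  · rw [linearIndependent_iff']
    intro s g h w hw
    have h2 := congrArg (coordT b w) h
    simp only [map_sum, map_smul, coordT_tprod_basis, smul_eq_mul, map_zero,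
      mul_ite, mul_one, mul_zero, Finset.sum_ite_eq' s, if_pos hw] at h2
    exact h2
  · rw [← PiTensorProduct.span_tprod_eq_top (R := K) (s := fun _ : Fin r => V), Submodule.span_le]
    rintro x ⟨v, rfl⟩
    rw [tprod_expand b v]
    exact Submodule.sum_mem _ fun w _ => Submodule.smul_mem _ _
      (Submodule.subset_span ⟨w, rfl⟩)

lemma tensorBasis_apply (b : Module.Basis ι K V) (w : Fin r → ι) :
    tensorBasis b w = tprod K (fun i => b (w i)) := by
  simp [tensorBasis, Module.Basis.mk_apply]

lemma tensorBasis_repr_tprod (b : Module.Basis ι K V) (w w' : Fin r → ι) :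
    (tensorBasis b).repr (tprod K (fun i => b (w' i))) w
      = if w' = w then 1 else 0 := by
  rw [← tensorBasis_apply, Module.Basis.repr_self, Finsupp.single_apply]

end aux

section matrixlemma

variable {K : Type*} [Field K] {n : Type*} [Fintype n] [DecidableEq n]

lemma fin_zero_sub_one (m : ℕ) : (0 : Fin (m + 1)) - 1 = Fin.last m := by
  cases m with
  | zero => decide
  | succ m =>
    ext
    simp [Fin.sub_def, Nat.mod_eq_of_lt]

lemma fin_succ_sub_one {m : ℕ} (j : Fin m) :
    (j.succ : Fin (m + 1)) - 1 = j.castSucc := by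
  have hm : 1 ≤ m := Nat.one_le_iff_ne_zero.mpr (by rintro rfl; exact j.elim0)
  ext
  rw [Fin.sub_def]
  simp only [Fin.val_succ, Fin.coe_castSucc, Fin.val_one']
  rw [Nat.mod_eq_of_lt (by omega : 1 < m + 1)]
  rw [show m + 1 - 1 + (j.1 + 1) = j.1 + (m + 1) from by omega]
  rw [Nat.add_mod_right]
  exact Nat.mod_eq_of_lt (by omega)

lemma cyc_sum (M : Matrix n n K) :
    ∀ (r : ℕ) (e : Fin (r + 1) → ℕ),
      ∑ w : Fin (r + 1) → n, ∏ i, (M ^ e i) (w i) (w (i - 1))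
        = Matrix.trace (M ^ ∑ i, e i) := by
  intro r
  induction r with
  | zero =>
    intro e
    rw [← (Equiv.funUnique (Fin 1) n).symm.sum_comp]
    simp [Matrix.trace, Matrix.diag]
  | succ r ih =>
    intro e
    set e' : Fin (r + 1) → ℕ := Fin.cons (e 1 + e 0) (fun k => e k.succ.succ) with he'
    have hsum : ∑ i, e' i = ∑ i, e i := by
      rw [Fin.sum_univ_succ e', Fin.sum_univ_succ e, Fin.sum_univ_succ (fun j => e j.succ)]
      simp only [he', Fin.cons_zero, Fin.cons_succ, Fin.succ_zero_eq_one]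
      omega
    have hre : ∑ w : Fin (r + 2) → n, ∏ i, (M ^ e i) (w i) (w (i - 1))
        = ∑ w' : Fin (r + 1) → n, ∑ x : n,
            ∏ i, (M ^ e i) (Fin.cons (α := fun _ : Fin (r + 2) => n) x w' i)
              (Fin.cons (α := fun _ : Fin (r + 2) => n) x w' (i - 1)) := by
      rw [← (Fin.consEquiv (fun _ : Fin (r + 2) => n)).sum_comp, Fintype.sum_prod_type,
        Finset.sum_comm]
      rfl
    rw [hre]
    have key : ∀ w' : Fin (r + 1) → n,
        ∑ x : n, ∏ i, (M ^ e i) (Fin.cons (α := fun _ : Fin (r + 2) => n) x w' i)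
              (Fin.cons (α := fun _ : Fin (r + 2) => n) x w' (i - 1))
        = ∏ j, (M ^ e' j) (w' j) (w' (j - 1)) := by
      intro w'
      have hprod : ∀ x : n,
          ∏ i, (M ^ e i) (Fin.cons (α := fun _ : Fin (r + 2) => n) x w' i)
              (Fin.cons (α := fun _ : Fin (r + 2) => n) x w' (i - 1))
          = ((M ^ e 1) (w' 0) x * (M ^ e 0) x (w' (Fin.last r))) *
            ∏ k : Fin r, (M ^ e k.succ.succ) (w' k.succ) (w' k.castSucc) := by
        intro x
        rw [Fin.prod_univ_succ]
        have h0 : Fin.cons (α := fun _ : Fin (r + 2) => n) x w' ((0 : Fin (r + 2)) - 1)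
            = w' (Fin.last r) := by
          rw [fin_zero_sub_one, ← Fin.succ_last, Fin.cons_succ]
        have h1 : ∀ j : Fin (r + 1),
            Fin.cons (α := fun _ : Fin (r + 2) => n) x w' (j.succ - 1)
            = Fin.cons (α := fun _ : Fin (r + 2) => n) x w' j.castSucc := by
          intro j; rw [fin_succ_sub_one]
        simp only [h0, h1, Fin.cons_zero, Fin.cons_succ]
        rw [Fin.prod_univ_succ]
        have h2 : Fin.cons (α := fun _ : Fin (r + 2) => n) x w'
            ((0 : Fin (r + 1)).castSucc) = x := by simp
        have h3 : ∀ k : Fin r, Fin.cons (α := fun _ : Fin (r + 2) => n) x w'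
            (k.succ.castSucc) = w' k.castSucc := by
          intro k; rw [← Fin.succ_castSucc, Fin.cons_succ]
        simp only [h2, h3, Fin.cons_succ, Fin.succ_zero_eq_one]
        ring
      simp only [hprod]
      rw [← Finset.sum_mul, ← Matrix.mul_apply, ← pow_add]
      rw [Fin.prod_univ_succ]
      congr 1
      · rw [he', Fin.cons_zero, fin_zero_sub_one]
      · refine Finset.prod_congr rfl fun k _ => ?_
        rw [he', Fin.cons_succ, fin_succ_sub_one]
    simp only [key]
    rw [ih e', hsum]

end matrixlemma

theorem stmt15 (K : Type*) [Field K] (V : Type*) [AddCommGroup V] [Module K V]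
    [FiniteDimensional K V] (r : ℕ) [NeZero r] (f : V →ₗ[K] V) :
    (∀ T : (⨂[K] _ : Fin r, V) →ₗ[K] (⨂[K] _ : Fin r, V),
      (∀ v : Fin r → V,
        T (⨂ₜ[K] i, v i) = ⨂ₜ[K] i, f (v (i - 1))) →
      LinearMap.trace K _ T = LinearMap.trace K V (f ^ r)) ∧
    (∀ T : (⨂[K] _ : Fin r, V) →ₗ[K] (⨂[K] _ : Fin r, V),
      (∀ v : Fin r → V,
        T (⨂ₜ[K] i, v i) = ⨂ₜ[K] i, v (i - 1)) →
      LinearMap.trace K _ T = (Module.finrank K V : K)) := by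
  have key : ∀ (g : V →ₗ[K] V)
      (T : (⨂[K] _ : Fin r, V) →ₗ[K] (⨂[K] _ : Fin r, V)),
      (∀ v : Fin r → V, T (⨂ₜ[K] i, v i) = ⨂ₜ[K] i, g (v (i - 1))) →
      LinearMap.trace K _ T = LinearMap.trace K V (g ^ r) := by
    intro g T hT
    obtain ⟨s, rfl⟩ := Nat.exists_eq_succ_of_ne_zero (NeZero.ne r)
    classical
    set b := Module.finBasis K V with hb
    set B : Module.Basis (Fin (s + 1) → Fin (Module.finrank K V)) K (⨂[K] _ : Fin (s + 1), V) :=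
      tensorBasis b with hB
    rw [LinearMap.trace_eq_matrix_trace K B T,
      LinearMap.trace_eq_matrix_trace K b (g ^ (s + 1))]
    set M : Matrix (Fin (Module.finrank K V)) (Fin (Module.finrank K V)) K :=
      LinearMap.toMatrixAlgEquiv b g with hM
    have hEq : LinearMap.toMatrix b b (g ^ (s + 1)) = M ^ (s + 1) := by
      have : LinearMap.toMatrix b b (g ^ (s + 1))
          = LinearMap.toMatrixAlgEquiv b (g ^ (s + 1)) := rfl
      rw [this, map_pow]
    rw [hEq]
    have hdiag : ∀ w : Fin (s + 1) → Fin (Module.finrank K V),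
        LinearMap.toMatrix B B T w w = ∏ i, M (w i) (w (i - 1)) := by
      intro w
      rw [LinearMap.toMatrix_apply, hB, tensorBasis_apply b w, hT,
        tprod_expand b (fun i => g (b (w (i - 1)))), map_sum, Finsupp.finset_sum_apply]
      simp only [map_smul, Finsupp.smul_apply, hB, tensorBasis_repr_tprod, smul_eq_mul,
        mul_ite, mul_one, mul_zero]
      rw [Finset.sum_ite_eq' Finset.univ w, if_pos (Finset.mem_univ w)]
      exact Finset.prod_congr rfl fun i _ =>
        (LinearMap.toMatrixAlgEquiv_apply b g (w i) (w (i - 1))).symm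
    calc Matrix.trace (LinearMap.toMatrix B B T)
        = ∑ w : Fin (s + 1) → Fin (Module.finrank K V),
            ∏ i, M (w i) (w (i - 1)) := by
          simp only [Matrix.trace, Matrix.diag]
          exact Finset.sum_congr rfl fun w _ => hdiag w
      _ = Matrix.trace (M ^ (s + 1)) := by
          have h := cyc_sum M s (fun _ => 1)
          simpa using h
  refine ⟨key f, fun T hT => ?_⟩
  have h1 := key 1 T (fun v => by simpa using hT v)
  rw [h1, one_pow, LinearMap.trace_one]
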